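/- Let D be a finite set of binary strings of length N and let f, g : D → E be functions with Gram matrices F and G. For e ∈ E let f^{-1}(e) = {x ∈ D : f(x) = e}, and let G_e denote the restriction of G to f^{-1}(e) × f^{-1}(e). Suppose that for every e ∈ E with f^{-1}(e) nonempty there is a feasible solution for γ(J − G_e) on domain f^{-1}(e) with cost function c_e. Then there is a feasible solution for γ(F − F∘G) on domain D whose cost function c satisfies c(x) ≤ c_{f(x)}(x) for all x ∈ D. -/

import Mathlib

open Finset

/-- A feasible solution for the filtered γ₂-norm SDP `γ(A)` on domain `D ⊆ {0,1}^N`,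
with cost function `c`. -/
def GammaFeasible {N : ℕ} (D : Finset (Fin N → Bool))
    (A : (Fin N → Bool) → (Fin N → Bool) → ℝ)
    (c : (Fin N → Bool) → ℝ) : Prop :=
  ∃ (d : ℕ) (u v : (Fin N → Bool) → Fin N → EuclideanSpace ℂ (Fin d)),
    (∀ x ∈ D, ∀ y ∈ D,
      ∑ j ∈ Finset.univ.filter (fun j => x j ≠ y j),
        (inner ℂ (u x j) (v y j) : ℂ) = (A x y : ℂ)) ∧
    (∀ x ∈ D, c x = max (∑ j, ‖u x j‖ ^ 2) (∑ j, ‖v x j‖ ^ 2))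

/-- The Gram matrix of a function `f`. -/
def Gram {N : ℕ} {E : Type*} [DecidableEq E] (f : (Fin N → Bool) → E) :
    (Fin N → Bool) → (Fin N → Bool) → ℝ :=
  fun x y => if f x = f y then 1 else 0

private lemma sum_dite_fin {M : Type*} [AddCommMonoid M] {m m0 : ℕ} (hm0 : m0 ≤ m)
    (ψ : Fin m0 → M) :
    ∑ i : Fin m, (if h : (i : ℕ) < m0 then ψ ⟨i, h⟩ else 0) = ∑ i : Fin m0, ψ i := by
  rw [← Finset.sum_subset (Finset.subset_univ (Finset.univ.map (Fin.castLEEmb hm0)))]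
  · rw [Finset.sum_map]
    refine Finset.sum_congr rfl fun i _ => ?_
    simp [Fin.castLEEmb, Fin.castLE]
  · intro i _ hi
    rw [dif_neg]
    intro hlt
    exact hi (by
      simp only [Finset.mem_map, Finset.mem_univ, true_and]
      exact ⟨⟨(i : ℕ), hlt⟩, by simp [Fin.castLEEmb, Fin.castLE]⟩)

set_option maxHeartbeats 600000 in
theorem gamma_output_composition {N : ℕ} {E : Type*} [DecidableEq E]
    (D : Finset (Fin N → Bool))
    (f g : (Fin N → Bool) → E)
    (c : E → (Fin N → Bool) → ℝ)
    (h : ∀ e : E, (∃ x ∈ D, f x = e) →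
      GammaFeasible (D.filter (fun x => f x = e))
        (fun x y => 1 - Gram g x y) (c e)) :
    ∃ cc : (Fin N → Bool) → ℝ,
      GammaFeasible D (fun x y => Gram f x y - Gram f x y * Gram g x y) cc ∧
      ∀ x ∈ D, cc x ≤ c (f x) x := by
  classical
  set S := D.image f with hSdef
  have key : ∀ e : {e : E // e ∈ S}, GammaFeasible (D.filter fun x => f x = (e : E))
      (fun x y => 1 - Gram g x y) (c e) := by
    rintro ⟨e, he⟩
    exact h e (by simpa [hSdef, Finset.mem_image] using he)
  choose dd uu vv hfeas hcost using key
  set m := Finset.univ.sup (fun e : {e : E // e ∈ S} => dd e) with hm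
  have hdd : ∀ e, dd e ≤ m := fun e => Finset.le_sup (Finset.mem_univ e)
  set n := S.card with hn
  set idx : {e : E // e ∈ S} → Fin n := fun e => S.equivFin e with hidx
  have idx_inj : Function.Injective idx := fun a b hab => S.equivFin.injective hab
  -- block embedding of a fiber vector into the big space (as an index function)
  set Φ : (e : {e : E // e ∈ S}) → EuclideanSpace ℂ (Fin (dd e)) → Fin m × Fin n → ℂ :=
    fun e w p => if hp : (p.1 : ℕ) < dd e then (if p.2 = idx e then w ⟨p.1, hp⟩ else 0) else 0
    with hΦ
  have Φ_ne : ∀ e w p, p.2 ≠ idx e → Φ e w p = 0 := by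
    intro e w p hne
    simp [hΦ, hne]
  -- collapse lemma for same block
  have hsame : ∀ {M : Type} [AddCommMonoid M] (e : {e : E // e ∈ S})
      (w w' : EuclideanSpace ℂ (Fin (dd e))) (F : ℂ → ℂ → M) (hF : F 0 0 = 0),
      ∑ p : Fin m × Fin n, F (Φ e w p) (Φ e w' p) = ∑ i : Fin (dd e), F (w i) (w' i) := by
    intro M _ e w w' F hF
    rw [Fintype.sum_prod_type_right,
      Finset.sum_eq_single_of_mem (idx e) (Finset.mem_univ _)]
    · rw [← sum_dite_fin (hdd e) (fun i => F (w i) (w' i))]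
      refine Finset.sum_congr rfl fun i _ => ?_
      simp only [hΦ]
      by_cases hi : (i : ℕ) < dd e
      · simp [dif_pos hi]
      · simp [dif_neg hi, hF]
    · intro b _ hb
      refine Finset.sum_eq_zero fun i _ => ?_
      rw [Φ_ne e w (i, b) hb, Φ_ne e w' (i, b) hb]
      exact hF
  -- orthogonality between different blocks
  have horth : ∀ {M : Type} [AddCommMonoid M] (e e' : {e : E // e ∈ S}), e ≠ e' →
      ∀ (w : EuclideanSpace ℂ (Fin (dd e))) (w' : EuclideanSpace ℂ (Fin (dd e')))
      (F : ℂ → ℂ → M), (∀ z, F 0 z = 0) → (∀ z, F z 0 = 0) →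
      ∑ p : Fin m × Fin n, F (Φ e w p) (Φ e' w' p) = 0 := by
    intro M _ e e' hne w w' F hFl hFr
    refine Finset.sum_eq_zero fun p _ => ?_
    by_cases hb : p.2 = idx e
    · rw [Φ_ne e' w' p (by rw [hb]; exact fun hc => hne (idx_inj hc)), hFr]
    · rw [Φ_ne e w p hb, hFl]
  set U : (Fin N → Bool) → Fin N → EuclideanSpace ℂ (Fin (m * n)) := fun x j => WithLp.toLp 2 fun k =>
    if hx : f x ∈ S then Φ ⟨f x, hx⟩ (uu ⟨f x, hx⟩ x j) (finProdFinEquiv.symm k) else 0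
    with hU
  set V : (Fin N → Bool) → Fin N → EuclideanSpace ℂ (Fin (m * n)) := fun x j => WithLp.toLp 2 fun k =>
    if hx : f x ∈ S then Φ ⟨f x, hx⟩ (vv ⟨f x, hx⟩ x j) (finProdFinEquiv.symm k) else 0
    with hV
  -- inner products
  have hinner : ∀ x y (hx : f x ∈ S) (hy : f y ∈ S) (j : Fin N),
      (inner ℂ (U x j) (V y j) : ℂ) =
        if heq : f x = f y then
          (inner ℂ (uu ⟨f x, hx⟩ x j) (vv ⟨f x, hx⟩ y j) : ℂ) else 0 := by
    intro x y hx hy j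
    have step : (inner ℂ (U x j) (V y j) : ℂ) =
        ∑ p : Fin m × Fin n,
          (starRingEnd ℂ) (Φ ⟨f x, hx⟩ (uu ⟨f x, hx⟩ x j) p) *
            Φ ⟨f y, hy⟩ (vv ⟨f y, hy⟩ y j) p := by
      calc (inner ℂ (U x j) (V y j) : ℂ)
          = ∑ k : Fin (m * n), (fun p => (starRingEnd ℂ) (Φ ⟨f x, hx⟩ (uu ⟨f x, hx⟩ x j) p) *
              Φ ⟨f y, hy⟩ (vv ⟨f y, hy⟩ y j) p) (finProdFinEquiv.symm k) := by
            rw [PiLp.inner_apply]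
            refine Finset.sum_congr rfl fun k _ => ?_
            simp only [hU, hV, PiLp.toLp_apply, dif_pos hx, dif_pos hy, RCLike.inner_apply']
        _ = _ := Fintype.sum_equiv finProdFinEquiv.symm _ _ (fun k => rfl)
    by_cases heq : f x = f y
    · rw [dif_pos heq, step]
      have hxy : (⟨f y, hy⟩ : {e : E // e ∈ S}) = ⟨f x, hx⟩ := Subtype.ext heq.symm
      rw [hxy, hsame ⟨f x, hx⟩ (uu ⟨f x, hx⟩ x j) (vv ⟨f x, hx⟩ y j)
        (fun a b => (starRingEnd ℂ) a * b) (by simp), PiLp.inner_apply]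
      refine Finset.sum_congr rfl fun i _ => ?_
      rw [RCLike.inner_apply']
    · rw [dif_neg heq, step]
      exact horth ⟨f x, hx⟩ ⟨f y, hy⟩ (fun hc => heq (congrArg Subtype.val hc))
        _ _ (fun a b => (starRingEnd ℂ) a * b) (by intro z; simp) (by intro z; simp)
  -- norms
  have hnormU : ∀ x (hx : f x ∈ S) (j : Fin N), ‖U x j‖ = ‖uu ⟨f x, hx⟩ x j‖ := by
    intro x hx j
    rw [EuclideanSpace.norm_eq, EuclideanSpace.norm_eq]
    congr 1
    calc ∑ k : Fin (m * n), ‖U x j k‖ ^ 2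
        = ∑ k : Fin (m * n), (fun p => ‖Φ ⟨f x, hx⟩ (uu ⟨f x, hx⟩ x j) p‖ ^ 2)
            (finProdFinEquiv.symm k) := by
          refine Finset.sum_congr rfl fun k _ => ?_
          simp only [hU, PiLp.toLp_apply, dif_pos hx]
      _ = ∑ p : Fin m × Fin n, ‖Φ ⟨f x, hx⟩ (uu ⟨f x, hx⟩ x j) p‖ ^ 2 :=
          Fintype.sum_equiv finProdFinEquiv.symm _ _ (fun k => rfl)
      _ = ∑ i, ‖uu ⟨f x, hx⟩ x j i‖ ^ 2 :=
          hsame ⟨f x, hx⟩ (uu ⟨f x, hx⟩ x j) (uu ⟨f x, hx⟩ x j)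
            (fun a _ => ‖a‖ ^ 2) (by simp)
  have hnormV : ∀ x (hx : f x ∈ S) (j : Fin N), ‖V x j‖ = ‖vv ⟨f x, hx⟩ x j‖ := by
    intro x hx j
    rw [EuclideanSpace.norm_eq, EuclideanSpace.norm_eq]
    congr 1
    calc ∑ k : Fin (m * n), ‖V x j k‖ ^ 2
        = ∑ k : Fin (m * n), (fun p => ‖Φ ⟨f x, hx⟩ (vv ⟨f x, hx⟩ x j) p‖ ^ 2)
            (finProdFinEquiv.symm k) := by
          refine Finset.sum_congr rfl fun k _ => ?_
          simp only [hV, PiLp.toLp_apply, dif_pos hx]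
      _ = ∑ p : Fin m × Fin n, ‖Φ ⟨f x, hx⟩ (vv ⟨f x, hx⟩ x j) p‖ ^ 2 :=
          Fintype.sum_equiv finProdFinEquiv.symm _ _ (fun k => rfl)
      _ = ∑ i, ‖vv ⟨f x, hx⟩ x j i‖ ^ 2 :=
          hsame ⟨f x, hx⟩ (vv ⟨f x, hx⟩ x j) (vv ⟨f x, hx⟩ x j)
            (fun a _ => ‖a‖ ^ 2) (by simp)
  refine ⟨fun x => max (∑ j, ‖U x j‖ ^ 2) (∑ j, ‖V x j‖ ^ 2),
    ⟨m * n, U, V, ?_, fun x _ => rfl⟩, ?_⟩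
  · intro x hx y hy
    have hfx : f x ∈ S := Finset.mem_image_of_mem f hx
    have hfy : f y ∈ S := Finset.mem_image_of_mem f hy
    by_cases heq : f x = f y
    · have hxm : x ∈ D.filter fun z => f z = f x := Finset.mem_filter.2 ⟨hx, rfl⟩
      have hym : y ∈ D.filter fun z => f z = f x := Finset.mem_filter.2 ⟨hy, heq.symm⟩
      have hfe := hfeas ⟨f x, hfx⟩ x hxm y hym
      calc ∑ j ∈ Finset.univ.filter (fun j => x j ≠ y j), (inner ℂ (U x j) (V y j) : ℂ)
          = ∑ j ∈ Finset.univ.filter (fun j => x j ≠ y j),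
              (inner ℂ (uu ⟨f x, hfx⟩ x j) (vv ⟨f x, hfx⟩ y j) : ℂ) := by
            refine Finset.sum_congr rfl fun j _ => ?_
            rw [hinner x y hfx hfy j, dif_pos heq]
        _ = ((1 - Gram g x y : ℝ) : ℂ) := hfe
        _ = ((Gram f x y - Gram f x y * Gram g x y : ℝ) : ℂ) := by
            simp [Gram, heq]
    · have hz : ∑ j ∈ Finset.univ.filter (fun j => x j ≠ y j),
          (inner ℂ (U x j) (V y j) : ℂ) = 0 := by
        refine Finset.sum_eq_zero fun j _ => ?_
        rw [hinner x y hfx hfy j, dif_neg heq]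
      rw [hz]
      simp [Gram, heq]
  · intro x hx
    have hfx : f x ∈ S := Finset.mem_image_of_mem f hx
    have hxm : x ∈ D.filter fun z => f z = f x := Finset.mem_filter.2 ⟨hx, rfl⟩
    have hc := hcost ⟨f x, hfx⟩ x hxm
    have h1 : ∑ j, ‖U x j‖ ^ 2 = ∑ j, ‖uu ⟨f x, hfx⟩ x j‖ ^ 2 :=
      Finset.sum_congr rfl fun j _ => by rw [hnormU x hfx j]
    have h2 : ∑ j, ‖V x j‖ ^ 2 = ∑ j, ‖vv ⟨f x, hfx⟩ x j‖ ^ 2 :=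
      Finset.sum_congr rfl fun j _ => by rw [hnormV x hfx j]
    refine le_of_eq ?_
    show max (∑ j, ‖U x j‖ ^ 2) (∑ j, ‖V x j‖ ^ 2) = c (f x) x
    rw [hc, h1, h2]
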